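/- Let $K : \mathbb{R}^n \times (0,\infty) \to \mathbb{R}$ satisfy $|K(x,t)| \leq C(t^{1/(2\alpha)}+|x|)^{-(n+1)}$ with $\alpha \in (1/2,1)$, and let $f$ be supported in $B(0,2) \times [0,1]$ with $\|f\|_{GY} = \sup_{t>0} t^{2-1/\alpha}\|f(\cdot,t)\|_{L^\infty} < \infty$. Then $\big|\int_0^1 \int_{\mathbb{R}^n} K(-y, 1-s) f(y,s)\, dy\, ds\big| \leq C' \|f\|_{GY}$, where $C'$ depends only on $n, \alpha, C$. -/

import Mathlib

open MeasureTheory Real Metric intervalIntegral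
open scoped ENNReal

/-- The `GY` norm `‖f‖_{GY} = sup_{t>0} t^{2-1/α} ‖f(·,t)‖_{L^∞}`. -/
noncomputable def GYnorm (n : ℕ) (α : ℝ)
    (f : EuclideanSpace ℝ (Fin n) → ℝ → ℝ) : ℝ≥0∞ :=
  ⨆ (t : ℝ) (_ : 0 < t),
    ENNReal.ofReal (t ^ (2 - 1/α)) *
      ⨆ y : EuclideanSpace ℝ (Fin n), (‖f y t‖₊ : ℝ≥0∞)

lemma half_rpow_neg (r : ℝ) : ((1:ℝ)/2) ^ (-r) = 2 ^ r := by
  rw [one_div, Real.inv_rpow (by norm_num : (0:ℝ) ≤ 2), Real.rpow_neg (by norm_num), inv_inv]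

lemma GY_bound (n : ℕ) (α : ℝ) (f : EuclideanSpace ℝ (Fin n) → ℝ → ℝ)
    (hf : GYnorm n α f < ⊤) {s : ℝ} (hs : 0 < s) (y : EuclideanSpace ℝ (Fin n)) :
    |f y s| ≤ (GYnorm n α f).toReal / s ^ (2 - 1/α) := by
  set γ := 2 - 1/α
  have hsγ : 0 < s ^ γ := Real.rpow_pos_of_pos hs _
  have hne : ENNReal.ofReal (s ^ γ) ≠ 0 := by
    simp [ENNReal.ofReal_eq_zero, not_le, hsγ]
  have h1 : ENNReal.ofReal (s ^ γ) * (‖f y s‖₊ : ℝ≥0∞) ≤ GYnorm n α f := by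
    refine le_trans ?_ (le_iSup_of_le s (le_iSup_of_le hs le_rfl))
    exact mul_le_mul_right (le_iSup (fun y' => (‖f y' s‖₊ : ℝ≥0∞)) y) _
  have h2 : (‖f y s‖₊ : ℝ≥0∞) ≤ GYnorm n α f / ENNReal.ofReal (s ^ γ) := by
    rw [ENNReal.le_div_iff_mul_le (Or.inl hne) (Or.inl ENNReal.ofReal_ne_top), mul_comm]
    exact h1
  have hfin : GYnorm n α f / ENNReal.ofReal (s ^ γ) ≠ ⊤ :=
    (ENNReal.div_lt_top hf.ne hne).ne
  have h3 := ENNReal.toReal_mono hfin h2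
  rwa [ENNReal.toReal_div, ENNReal.toReal_ofReal hsγ.le, ENNReal.coe_toReal, coe_nnnorm,
    Real.norm_eq_abs] at h3

/-- Pointwise estimate (Step 3): for `f` supported in `B(0,2)×[0,1]` with finite
`GY` norm, the convolution against a kernel with Poisson-type decay is bounded by
`C' ‖f‖_{GY}`. -/
theorem stmt_13 (n : ℕ) (hn : 1 ≤ n) (α : ℝ) (hα : 1/2 < α) (hα' : α < 1)
    (C : ℝ) (hC : 0 ≤ C) :
    ∃ C' : ℝ, 0 < C' ∧
      ∀ (K : EuclideanSpace ℝ (Fin n) → ℝ → ℝ)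
        (f : EuclideanSpace ℝ (Fin n) → ℝ → ℝ),
        (∀ x t, 0 < t → |K x t| ≤ C * (t ^ (1/(2*α)) + ‖x‖) ^ (-(n : ℝ) - 1)) →
        Measurable (Function.uncurry f) →
        (∀ y s, 2 ≤ ‖y‖ ∨ s < 0 ∨ 1 < s → f y s = 0) →
        GYnorm n α f < ⊤ →
        |∫ s in (0:ℝ)..1, ∫ y : EuclideanSpace ℝ (Fin n), K (-y) (1 - s) * f y s|
          ≤ C' * (GYnorm n α f).toReal := by
  have hα0 : 0 < α := by linarith
  set δ := 1/(2*α) with hδdef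
  set γ := 2 - 1/α with hγdef
  have hδ0 : 0 < δ := by positivity
  have hδ1 : δ < 1 := by
    rw [hδdef, div_lt_one (by linarith)]; linarith
  have hγ0 : 0 < γ := by
    have : 1/α < 2 := by rw [div_lt_iff₀ hα0]; linarith
    rw [hγdef]; linarith
  have hγ1 : γ < 1 := by
    have : 1 < 1/α := by rw [lt_div_iff₀ hα0]; linarith
    rw [hγdef]; linarith
  set h₀ : EuclideanSpace ℝ (Fin n) → ℝ := fun x => (1 + ‖x‖) ^ (-(n:ℝ)-1) with hh₀
  have hI : Integrable h₀ := by
    have hr : ((Module.finrank ℝ (EuclideanSpace ℝ (Fin n)) : ℝ)) < (n:ℝ)+1 := by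
      rw [finrank_euclideanSpace_fin]; linarith
    have := integrable_one_add_norm (E := EuclideanSpace ℝ (Fin n)) (μ := volume) hr
    simpa [hh₀, show -((n:ℝ)+1) = -(n:ℝ)-1 by ring] using this
  set I₀ := ∫ x, h₀ x with hI₀def
  have hI₀0 : 0 ≤ I₀ := integral_nonneg fun x => Real.rpow_nonneg (by positivity) _
  set J := ∫ s in (0:ℝ)..1, ((2:ℝ)^γ * (1-s)^(-δ) + 2^δ * s^(-γ)) with hJdef
  have hint1 : IntervalIntegrable (fun s : ℝ => s ^ (-γ)) volume 0 1 :=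
    intervalIntegrable_rpow' (by linarith)
  have hint2 : IntervalIntegrable (fun s : ℝ => (1-s) ^ (-δ)) volume 0 1 := by
    have := (intervalIntegrable_rpow' (r := -δ) (by linarith)
      (a := 0) (b := 1)).comp_sub_left 1
    simpa using this.symm
  have hJint : IntervalIntegrable
      (fun s : ℝ => (2:ℝ)^γ * (1-s)^(-δ) + 2^δ * s^(-γ)) volume 0 1 :=
    (hint2.const_mul _).add (hint1.const_mul _)
  have hJ0 : 0 ≤ J := by
    rw [hJdef]
    apply intervalIntegral.integral_nonneg zero_le_one
    intro u hu
    have h1 : (0:ℝ) ≤ 1 - u := by linarith [hu.2]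
    have h2 : (0:ℝ) ≤ u := hu.1
    positivity
  have hCIJ : 0 ≤ C * I₀ * J := mul_nonneg (mul_nonneg hC hI₀0) hJ0
  refine ⟨C * I₀ * J + 1, by linarith, ?_⟩
  intro K f hK hmf hsupp hGY
  set M := (GYnorm n α f).toReal with hM
  have hM0 : 0 ≤ M := ENNReal.toReal_nonneg
  have hfb : ∀ s : ℝ, 0 < s → ∀ y, |f y s| ≤ M / s ^ γ := by
    intro s hs y
    rw [hγdef]
    exact GY_bound n α f hGY hs y
  have key : ∀ s ∈ Set.Ioo (0:ℝ) 1,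
      ‖∫ y, K (-y) (1-s) * f y s‖ ≤ (C*I₀*M) * (s^(-γ) * (1-s)^(-δ)) := by
    intro s hs
    have hs0 := hs.1
    have hs1 : 0 < 1 - s := by linarith [hs.2]
    set ε := (1-s)^δ with hε
    have hε0 : 0 < ε := Real.rpow_pos_of_pos hs1 _
    have hiden : ∀ y : EuclideanSpace ℝ (Fin n),
        (ε + ‖y‖) ^ (-(n:ℝ)-1) = ε ^ (-(n:ℝ)-1) * h₀ (ε⁻¹ • y) := by
      intro y
      have h1 : ε + ‖y‖ = ε * (1 + ‖ε⁻¹ • y‖) := by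
        rw [norm_smul, Real.norm_eq_abs, abs_of_pos (inv_pos.2 hε0)]
        field_simp
      rw [h1, Real.mul_rpow hε0.le (by positivity), hh₀]
    have hint : Integrable (fun y : EuclideanSpace ℝ (Fin n) =>
        (C * (M / s ^ γ)) * ((ε + ‖y‖) ^ (-(n:ℝ)-1))) := by
      apply Integrable.const_mul
      simp_rw [hiden]
      exact (hI.comp_smul (inv_ne_zero hε0.ne')).const_mul _
    have hpt : ∀ y, ‖K (-y) (1-s) * f y s‖ ≤
        (C * (M / s ^ γ)) * ((ε + ‖y‖) ^ (-(n:ℝ)-1)) := by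
      intro y
      rw [Real.norm_eq_abs, abs_mul]
      have hK' := hK (-y) (1-s) hs1
      rw [norm_neg] at hK'
      have hf' := hfb s hs0 y
      calc |K (-y) (1-s)| * |f y s|
          ≤ (C * ((1-s)^δ + ‖y‖)^(-(n:ℝ)-1)) * (M / s^γ) :=
            mul_le_mul hK' hf' (abs_nonneg _) (by positivity)
        _ = (C * (M / s^γ)) * ((ε + ‖y‖)^(-(n:ℝ)-1)) := by rw [← hε]; ring
    have hcomp : (∫ y : EuclideanSpace ℝ (Fin n), (ε+‖y‖)^(-(n:ℝ)-1))
        = ε^(-(n:ℝ)-1) * (ε^(n:ℕ) * I₀) := by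
      simp_rw [hiden]
      rw [MeasureTheory.integral_const_mul,
        Measure.integral_comp_inv_smul_of_nonneg volume h₀ hε0.le,
        finrank_euclideanSpace_fin, smul_eq_mul, hI₀def]
    have hpow : ε^(-(n:ℝ)-1) * (ε:ℝ)^(n:ℕ) = (1-s)^(-δ) := by
      rw [← Real.rpow_natCast ε n, ← Real.rpow_add hε0,
        show (-(n:ℝ)-1) + (n:ℕ) = -1 by push_cast; ring,
        Real.rpow_neg_one, hε, ← Real.rpow_neg_one ((1-s)^δ),
        ← Real.rpow_mul hs1.le]
      ring_nf
    calc ‖∫ y, K (-y) (1-s) * f y s‖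
        ≤ ∫ y, (C*(M/s^γ)) * ((ε+‖y‖)^(-(n:ℝ)-1)) :=
          MeasureTheory.norm_integral_le_of_norm_le hint (Filter.Eventually.of_forall hpt)
      _ = (C*(M/s^γ)) * ∫ y, (ε+‖y‖)^(-(n:ℝ)-1) := MeasureTheory.integral_const_mul _ _
      _ = (C*(M/s^γ)) * ((1-s)^(-δ) * I₀) := by rw [hcomp, ← hpow]; ring
      _ = (C*I₀*M) * (s^(-γ) * (1-s)^(-δ)) := by
          rw [Real.rpow_neg hs0.le γ, div_eq_mul_inv]
          ring
  have hae : ∀ᵐ t ∂volume.restrict (Set.uIoc (0:ℝ) 1),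
      ‖∫ y, K (-y) (1-t) * f y t‖ ≤ (C*I₀*M) * ((2:ℝ)^γ*(1-t)^(-δ) + 2^δ*t^(-γ)) := by
    have h1 : ∀ᵐ t : ℝ ∂volume.restrict (Set.uIoc (0:ℝ) 1), t ∈ Set.uIoc (0:ℝ) 1 :=
      ae_restrict_mem measurableSet_uIoc
    have h2 : ∀ᵐ t : ℝ ∂volume.restrict (Set.uIoc (0:ℝ) 1), t ≠ 1 := by
      refine ae_restrict_of_ae ?_
      refine ae_iff.2 ?_
      have : {t : ℝ | ¬ t ≠ 1} = {1} := by ext t; simp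
      rw [this]
      exact Real.volume_singleton
    filter_upwards [h1, h2] with t ht ht1
    have ht' : t ∈ Set.Ioo (0:ℝ) 1 := by
      rw [Set.uIoc_of_le zero_le_one] at ht
      exact ⟨ht.1, lt_of_le_of_ne ht.2 ht1⟩
    refine (key t ht').trans ?_
    have h1t : 0 < 1 - t := by linarith [ht'.2]
    apply mul_le_mul_of_nonneg_left ?_ (mul_nonneg (mul_nonneg hC hI₀0) hM0)
    have ha : 0 ≤ t^(-γ) := Real.rpow_nonneg ht'.1.le _
    have hb : 0 ≤ (1-t)^(-δ) := Real.rpow_nonneg h1t.le _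
    have hc : 0 ≤ (2:ℝ)^γ := Real.rpow_nonneg (by norm_num) _
    have hd : 0 ≤ (2:ℝ)^δ := Real.rpow_nonneg (by norm_num) _
    rcases le_total t (1/2) with h | h
    · have hlt : (1-t)^(-δ) ≤ 2^δ := by
        calc (1-t)^(-δ) ≤ ((1:ℝ)/2)^(-δ) :=
              Real.rpow_le_rpow_of_nonpos (by norm_num) (by linarith) (by linarith)
          _ = 2^δ := half_rpow_neg δ
      nlinarith [mul_le_mul_of_nonneg_left hlt ha, mul_nonneg hc hb]
    · have hlt : t^(-γ) ≤ 2^γ := by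
        calc t^(-γ) ≤ ((1:ℝ)/2)^(-γ) :=
              Real.rpow_le_rpow_of_nonpos (by norm_num) (by linarith) (by linarith)
          _ = 2^γ := half_rpow_neg γ
      nlinarith [mul_le_mul_of_nonneg_right hlt hb, mul_nonneg hd ha]
  have main := intervalIntegral.norm_integral_le_abs_of_norm_le hae
    (hJint.const_mul (C*I₀*M))
  rw [intervalIntegral.integral_const_mul, ← hJdef,
    abs_of_nonneg (mul_nonneg (mul_nonneg (mul_nonneg hC hI₀0) hM0) hJ0)] at main
  rw [← Real.norm_eq_abs]
  refine main.trans ?_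
  nlinarith [hM0, hCIJ]
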